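/- Let n ≥ 2 be even and let μ ∈ ℝ satisfy a_{n/2}(μ) + a_{n/2−1}(μ) = 0. Then a_n(μ) = 0, a_{n−1}(μ) = −1, and a_{n−2}(μ) = −2(1−μ). -/
import Mathlib


noncomputable def a (μ : ℝ) : ℕ → ℝ
  | 0 => 1
  | 1 => 2 * (1 - μ)
  | n + 2 => 2 * (1 - μ) * a μ (n + 1) - a μ n

lemma a_rec (μ : ℝ) (k : ℕ) : a μ (k + 2) = 2 * (1 - μ) * a μ (k + 1) - a μ k := rfl

lemma a_add (μ : ℝ) (p q : ℕ) :
    a μ (p + q + 2) = a μ (p + 1) * a μ (q + 1) - a μ p * a μ q := by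
  induction q using Nat.twoStepInduction generalizing p with
  | zero => rw [show p + 0 + 2 = p + 2 by omega, a_rec]; simp [a]; ring
  | one =>
      rw [show p + 1 + 2 = (p + 1) + 2 by omega, a_rec, a_rec,
        show (1:ℕ) + 1 = 0 + 2 by omega, a_rec]
      simp [a]; ring
  | more q ih1 ih2 =>
      have e1 : a μ (p + (q + 2) + 2)
          = 2 * (1 - μ) * a μ (p + (q + 1) + 2) - a μ (p + q + 2) := by
        rw [show p + (q + 2) + 2 = (p + q + 2) + 2 by omega, a_rec,
          show p + q + 2 + 1 = p + (q + 1) + 2 by omega]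
      have r2 : a μ (q + 2) = 2 * (1 - μ) * a μ (q + 1) - a μ q := a_rec μ q
      have r1 : a μ (q + 2 + 1) = 2 * (1 - μ) * a μ (q + 2) - a μ (q + 1) :=
        a_rec μ (q + 1)
      rw [e1, ih2 p, ih1 p, show q + 1 + 1 = q + 2 from rfl, r1, r2]
      ring

lemma a_det (μ : ℝ) (k : ℕ) :
    a μ (k + 1) ^ 2 - a μ (k + 2) * a μ k = 1 := by
  induction k with
  | zero => rw [a_rec]; simp [a]; ring
  | succ k ih =>
      rw [show k + 1 + 2 = (k + 1) + 2 by omega, a_rec (μ) (k + 1),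
        show k + 1 + 1 = k + 2 by omega, a_rec μ k] at *
      nlinarith [ih]

theorem stmt15 (n : ℕ) (hn : 2 ≤ n) (heven : Even n) (μ : ℝ)
    (h : a μ (n / 2) + a μ (n / 2 - 1) = 0) :
    a μ n = 0 ∧ a μ (n - 1) = -1 ∧ a μ (n - 2) = -2 * (1 - μ) := by
  obtain ⟨m, hm⟩ := heven
  rcases m with _ | _ | t
  · omega
  · -- n = 2
    subst hm
    norm_num at h ⊢
    have h1 : a μ 1 = 2 * (1 - μ) := rfl
    have h2 : a μ 2 = 2 * (1 - μ) * a μ 1 - a μ 0 := rfl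
    have h0 : a μ 0 = 1 := rfl
    refine ⟨?_, ?_, ?_⟩ <;> nlinarith [h, h1, h2, h0]
  · -- n = 2t + 4, m = t + 2
    have hn2 : n / 2 = t + 2 := by omega
    have hn21 : n / 2 - 1 = t + 1 := by omega
    rw [hn21, hn2] at h
    -- a n = a(2t+4) = a(t+2)^2 - a(t+1)^2
    have e0 : a μ n = a μ (t + 2) ^ 2 - a μ (t + 1) ^ 2 := by
      rw [show n = (t + 1) + (t + 1) + 2 by omega, a_add,
        show t + 1 + 1 = t + 2 by omega]; ring
    have heq : a μ (t + 2) = -a μ (t + 1) := by linarith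
    have hAn : a μ n = 0 := by rw [e0, heq]; ring
    -- a (n-1) = a(2t+3) = a(t+2)*a(t+1) - a(t+1)*a t
    have e1 : a μ (n - 1) = a μ (t + 2) * a μ (t + 1) - a μ (t + 1) * a μ t := by
      rw [show n - 1 = (t + 1) + t + 2 by omega, a_add,
        show t + 1 + 1 = t + 2 by omega]
    have hdet := a_det μ t
    have hAn1 : a μ (n - 1) = -1 := by
      rw [e1, heq]; rw [heq] at hdet; nlinarith [hdet]
    have hAn2 : a μ (n - 2) = -2 * (1 - μ) := by
      have := a_rec μ (n - 2)
      rw [show n - 2 + 2 = n by omega, show n - 2 + 1 = n - 1 by omega,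
        hAn, hAn1] at this
      linarith
    exact ⟨hAn, hAn1, hAn2⟩
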